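/- For all x, y, z ∈ ℝ one has Ω(x,y,z) = 0 if and only if at least one of the following holds modulo 2π: z = x, z = y, or y = h(x,z). -/

import Mathlib

open MeasureTheory Real Set Filter
open scoped Topology ENNReal ComplexConjugate

noncomputable section

/-- The fundamental periodic cell `I = [0, 2π)`. -/
def II : Set ℝ := Set.Ico 0 (2 * π)

/-- Lebesgue measure restricted to `I`. -/
def muI : Measure ℝ := volume.restrict II

/-- The dispersion relation `ω(x) = |sin(x/2)|`. -/
def omg (x : ℝ) : ℝ := |Real.sin (x / 2)|

/-- `Ω(x,y,z) = ω(x) + ω(y) − ω(z) − ω(x+y−z)`. -/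
def Omg (x y z : ℝ) : ℝ := omg x + omg y - omg z - omg (x + y - z)

/-- The representative of `x` modulo `2π` lying in `[0, 2π)`. -/
def mod2pi (x : ℝ) : ℝ := x - 2 * π * (⌊x / (2 * π)⌋ : ℝ)

/-- `h` on the fundamental cell: `h(x,z) = (z−x)/2 + 2 arcsin( tan(|z−x|/4) cos((x+z)/4) )`. -/
def h0 (x z : ℝ) : ℝ :=
  (z - x) / 2 + 2 * Real.arcsin (Real.tan (|z - x| / 4) * Real.cos ((x + z) / 4))

/-- The extension of `h` to all of `ℝ²`: `h(x,z) = h(x mod 2π, z mod 2π) − (x − (x mod 2π))`. -/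
def hFPU (x z : ℝ) : ℝ := h0 (mod2pi x) (mod2pi z) - (x - mod2pi x)

/-- `F₊(x,y) = (cos(x/2)+cos(y/2))² + 4 sin(x/2) sin(y/2)`. -/
def Fp (x y : ℝ) : ℝ :=
  (Real.cos (x / 2) + Real.cos (y / 2)) ^ 2 + 4 * Real.sin (x / 2) * Real.sin (y / 2)

/-- `F₋(x,y) = (cos(x/2)+cos(y/2))² − 4 sin(x/2) sin(y/2)`. -/
def Fm (x y : ℝ) : ℝ :=
  (Real.cos (x / 2) + Real.cos (y / 2)) ^ 2 - 4 * Real.sin (x / 2) * Real.sin (y / 2)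

/-- The kernel `K₁(x,y) = 4·𝟙(F₋(x,y) > 0)/√(F₋(x,y))`. -/
def K1 (x y : ℝ) : ℝ := if 0 < Fm x y then 4 / Real.sqrt (Fm x y) else 0

/-- The kernel `K₂(x,y) = 2/√(F₊(x,y))`. -/
def K2 (x y : ℝ) : ℝ := 2 / Real.sqrt (Fp x y)

/-- `V(x) = ∫_I K₂(x,y) dy`. -/
def VV (x : ℝ) : ℝ := ∫ y in II, K2 x y

/-- `W(x) = sin²(x/2)·V(x)`. -/
def WW (x : ℝ) : ℝ := Real.sin (x / 2) ^ 2 * VV x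


set_option maxHeartbeats 1000000



lemma star1 (φ ψ θ : ℝ) :
    Real.sin (ψ - φ) + Real.sin (θ + φ) - Real.sin (ψ + φ) + Real.sin (θ - φ)
      = 2 * (Real.cos φ * Real.sin θ - Real.cos ψ * Real.sin φ) := by
  simp [Real.sin_add, Real.sin_sub]; ring

lemma star2 (φ ψ θ : ℝ) :
    Real.sin (ψ - φ) + Real.sin (θ + φ) - Real.sin (ψ + φ) - Real.sin (θ - φ)
      = 2 * (Real.sin φ * (Real.cos θ - Real.cos ψ)) := by
  simp [Real.sin_add, Real.sin_sub]; ring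

lemma cell (a b c : ℝ) (ha0 : 0 ≤ a) (ha1 : a < π) (hb0 : 0 ≤ b) (hb1 : b < π)
    (hc0 : 0 ≤ c) (hc1 : c < π) :
    Real.sin a + Real.sin b - Real.sin c - |Real.sin (a + b - c)| = 0 ↔
      (c = a ∨ c = b ∨ ∃ n : ℤ,
        b = (c - a) / 2
          + Real.arcsin (Real.tan (|c - a| / 2) * Real.cos ((a + c) / 2)) + π * n) := by
  have hpi := Real.pi_pos
  set φ := (c - a) / 2 with hφdef
  set ψ := (a + c) / 2 with hψdef
  set θ := b - φ with hθdef
  have habs : |c - a| / 2 = |φ| := by rw [hφdef, abs_div]; norm_num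
  rw [habs]
  set t := Real.tan |φ| * Real.cos ψ with htdef
  have hφ1 : -(π / 2) < φ := by rw [hφdef]; linarith
  have hφ2 : φ < π / 2 := by rw [hφdef]; linarith
  have haφ : |φ| < π / 2 := abs_lt.2 ⟨hφ1, hφ2⟩
  have haφ0 : 0 ≤ |φ| := abs_nonneg φ
  have haφ1 := abs_le.1 (le_of_lt haφ)
  have haφ2 := le_abs_self φ
  have haφ3 := neg_abs_le φ
  have hcosφ : 0 < Real.cos φ := Real.cos_pos_of_mem_Ioo ⟨hφ1, hφ2⟩
  have hψ0 : |φ| ≤ ψ := abs_le.2 ⟨by rw [hφdef, hψdef]; linarith, by rw [hφdef, hψdef]; linarith⟩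
  have hψ1 : ψ ≤ π - |φ| := by
    have : |φ| ≤ π - ψ := abs_le.2 ⟨by rw [hφdef, hψdef]; linarith, by rw [hφdef, hψdef]; linarith⟩
    linarith
  have hψpos : 0 ≤ ψ := le_trans haφ0 hψ0
  have hψlt : ψ < π := by rw [hψdef]; linarith
  have hcosψ : |Real.cos ψ| ≤ Real.cos |φ| := by
    rw [abs_le]
    constructor
    · have h := Real.cos_le_cos_of_nonneg_of_le_pi hψpos (by linarith : π - |φ| ≤ π) hψ1
      rw [Real.cos_pi_sub] at h
      linarith
    · exact Real.cos_le_cos_of_nonneg_of_le_pi haφ0 hψlt.le hψ0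
  have hsinaφ : 0 ≤ Real.sin |φ| := Real.sin_nonneg_of_nonneg_of_le_pi haφ0 (by linarith)
  have hsin1 : Real.sin |φ| ≤ 1 := Real.sin_le_one _
  have hteq : t = Real.sin |φ| * Real.cos ψ / Real.cos φ := by
    rw [htdef, Real.tan_eq_sin_div_cos, Real.cos_abs]; ring
  have ht : |t| ≤ Real.sin |φ| := by
    rw [hteq, abs_div, abs_mul, abs_of_nonneg hsinaφ, abs_of_pos hcosφ, div_le_iff₀ hcosφ]
    have h9 : |Real.cos ψ| ≤ Real.cos φ := by rw [← Real.cos_abs φ]; exact hcosψ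
    exact mul_le_mul_of_nonneg_left h9 hsinaφ
  have ht1 : -1 ≤ t := by have := abs_le.1 ht; linarith
  have ht2 : t ≤ 1 := by have := abs_le.1 ht; linarith
  have harc : |Real.arcsin t| ≤ |φ| := by
    rw [abs_le]
    constructor
    · have h := Real.monotone_arcsin (show Real.sin (-|φ|) ≤ t by
        rw [Real.sin_neg]; have := abs_le.1 ht; linarith)
      rwa [Real.arcsin_sin (by linarith) (by linarith)] at h
    · have h := Real.monotone_arcsin (show t ≤ Real.sin |φ| by
        have := abs_le.1 ht; linarith)
      rwa [Real.arcsin_sin (by linarith) (by linarith)] at h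
  have harc' := abs_le.1 harc
  have hθlo : -φ ≤ θ := by rw [hθdef]; linarith
  have hθhi : θ < π - φ := by rw [hθdef]; linarith
  have ea : a = ψ - φ := by rw [hψdef, hφdef]; ring
  have eb : b = θ + φ := by rw [hθdef]; ring
  have ec : c = ψ + φ := by rw [hψdef, hφdef]; ring
  have ed : a + b - c = θ - φ := by rw [ea, eb, ec]; ring
  have E1 : Real.sin a + Real.sin b - Real.sin c + Real.sin (a + b - c)
      = 2 * (Real.cos φ * Real.sin θ - Real.cos ψ * Real.sin φ) := by
    rw [ed, ea, eb, ec]; exact star1 φ ψ θ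
  have E2 : Real.sin a + Real.sin b - Real.sin c - Real.sin (a + b - c)
      = 2 * (Real.sin φ * (Real.cos θ - Real.cos ψ)) := by
    rw [ed, ea, eb, ec]; exact star2 φ ψ θ
  constructor
  · intro hE
    by_cases hca : c = a
    · exact Or.inl hca
    by_cases hcb : c = b
    · exact Or.inr (Or.inl hcb)
    refine Or.inr (Or.inr ?_)
    have hφne : φ ≠ 0 := by
      intro h
      apply hca
      have : (c - a) / 2 = 0 := hφdef.symm.trans h
      linarith
    have hθψ : θ ≠ ψ := by
      intro h
      apply hcb
      rw [ec, ← h, eb]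
    by_cases hs : 0 ≤ Real.sin (a + b - c)
    · exfalso
      have h2 : Real.sin φ * (Real.cos θ - Real.cos ψ) = 0 := by
        rw [abs_of_nonneg hs] at hE; linarith
      have hsφ : Real.sin φ ≠ 0 := by
        intro h
        exact hφne ((Real.sin_eq_zero_iff_of_lt_of_lt (by linarith) (by linarith)).1 h)
      have hcc : Real.cos θ - Real.cos ψ = 0 := by
        rcases mul_eq_zero.1 h2 with h | h
        · exact absurd h hsφ
        · exact h
      have h3 : Real.sin ((θ + ψ) / 2) * Real.sin ((θ - ψ) / 2) = 0 := by
        have h4 := Real.cos_sub_cos θ ψ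
        rw [hcc] at h4
        linear_combination h4 / 2
      rw [ed] at hs
      rcases mul_eq_zero.1 h3 with h4 | h4
      · obtain ⟨k, hk⟩ := Real.sin_eq_zero_iff.1 h4
        have hk01 : k = 0 ∨ k = 1 := by
          have r1 : (-1 : ℝ) < k := by
            have h9 : (-1 : ℝ) * π < (k : ℝ) * π := by rw [hk]; linarith
            exact (mul_lt_mul_iff_left₀ hpi).1 h9
          have r2 : (k : ℝ) < 2 := by
            have h9 : (k : ℝ) * π < 2 * π := by rw [hk]; linarith
            exact (mul_lt_mul_iff_left₀ hpi).1 h9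
          have r1' : (-1 : ℤ) < k := by exact_mod_cast r1
          have r2' : (k : ℤ) < 2 := by exact_mod_cast r2
          omega
        rcases hk01 with rfl | rfl
        · have hθψ' : θ = -ψ := by push_cast at hk; linarith
          have hsc : Real.sin (θ - φ) = -Real.sin c := by
            rw [hθψ', ec, show -ψ - φ = -(ψ + φ) by ring, Real.sin_neg]
          have hsc1 : Real.sin c ≤ 0 := by
            rw [hsc] at hs; linarith
          have hsc2 : Real.sin c = 0 :=
            le_antisymm hsc1 (Real.sin_nonneg_of_nonneg_of_le_pi hc0 hc1.le)
          have hc' : c = 0 := (Real.sin_eq_zero_iff_of_lt_of_lt (by linarith) hc1).1 hsc2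
          have hψφ : ψ + φ = 0 := by rw [← ec]; exact hc'
          have hb' : b = 2 * φ := by rw [eb, hθψ']; linarith
          exact hφne (by linarith)
        · have hθ2 : θ = 2 * π - ψ := by push_cast at hk; linarith
          have hsc : Real.sin (θ - φ) = -Real.sin c := by
            rw [hθ2, ec, show 2 * π - ψ - φ = -(ψ + φ) + 2 * π by ring]
            rw [Real.sin_add_two_pi, Real.sin_neg]
          have hsc1 : Real.sin c ≤ 0 := by rw [hsc] at hs; linarith
          have hsc2 : Real.sin c = 0 :=
            le_antisymm hsc1 (Real.sin_nonneg_of_nonneg_of_le_pi hc0 hc1.le)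
          have hc' : c = 0 := (Real.sin_eq_zero_iff_of_lt_of_lt (by linarith) hc1).1 hsc2
          have hψφ : ψ + φ = 0 := by rw [← ec]; exact hc'
          -- θ = 2π - ψ = 2π + φ, but θ < π - φ, so 2π + φ < π - φ, i.e. φ < -π/2
          have : θ = 2 * π + φ := by rw [hθ2]; linarith
          linarith
      · obtain ⟨k, hk⟩ := Real.sin_eq_zero_iff.1 h4
        have hk0 : k = 0 := by
          have r1 : (-1 : ℝ) < k := by
            have h9 : (-1 : ℝ) * π < (k : ℝ) * π := by rw [hk]; linarith
            exact (mul_lt_mul_iff_left₀ hpi).1 h9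
          have r2 : (k : ℝ) < 1 := by
            have h9 : (k : ℝ) * π < 1 * π := by rw [hk]; linarith
            exact (mul_lt_mul_iff_left₀ hpi).1 h9
          have r1' : (-1 : ℤ) < k := by exact_mod_cast r1
          have r2' : (k : ℤ) < 1 := by exact_mod_cast r2
          omega
        subst hk0
        push_cast at hk
        exact hθψ (by linarith)
    · push_neg at hs
      have h2 : Real.cos φ * Real.sin θ - Real.cos ψ * Real.sin φ = 0 := by
        rw [abs_of_neg hs] at hE; linarith
      have hsθ : Real.sin θ = Real.sin φ * Real.cos ψ / Real.cos φ := by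
        rw [eq_div_iff (ne_of_gt hcosφ)]; linarith [mul_comm (Real.sin θ) (Real.cos φ)]
      rw [ed] at hs
      rcases lt_or_gt_of_ne hφne with hφneg | hφpos
      · have habsφ : |φ| = -φ := abs_of_neg hφneg
        have hst : Real.sin θ = -t := by
          rw [hteq, habsφ, Real.sin_neg, hsθ]; ring
        by_cases hθh : θ ≤ π / 2
        · exfalso
          have hθeq : θ = -Real.arcsin t := by
            have h := Real.arcsin_sin (x := θ) (by linarith) hθh
            rw [hst, Real.arcsin_neg] at h
            linarith
          have h5 : 0 ≤ θ - φ := by rw [hθeq]; rw [habsφ] at harc'; linarith [harc'.2]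
          have h6 : θ - φ ≤ π := by rw [hθeq]; rw [habsφ] at harc'; linarith [harc'.1]
          exact absurd (Real.sin_nonneg_of_nonneg_of_le_pi h5 h6) (not_le.2 hs)
        · push_neg at hθh
          have h := Real.arcsin_sin (x := π - θ) (by linarith) (by linarith)
          rw [Real.sin_pi_sub, hst, Real.arcsin_neg] at h
          refine ⟨1, ?_⟩
          rw [eb]
          push_cast
          linarith
      · have habsφ : |φ| = φ := abs_of_pos hφpos
        have hst : Real.sin θ = t := by rw [hteq, habsφ, hsθ]
        by_cases hθh : θ ≤ π / 2
        · refine ⟨0, ?_⟩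
          have hθeq : θ = Real.arcsin t := by
            have h := Real.arcsin_sin (x := θ) (by linarith) hθh
            rw [hst] at h
            linarith
          rw [eb]
          push_cast
          linarith
        · exfalso
          push_neg at hθh
          have h := Real.arcsin_sin (x := π - θ) (by linarith) (by linarith)
          rw [Real.sin_pi_sub, hst] at h
          -- h : arcsin t = π - θ, so θ = π - arcsin t
          have h5 : 0 ≤ θ - φ := by rw [habsφ] at harc'; linarith [harc'.2]
          have h6 : θ - φ ≤ π := by rw [habsφ] at harc'; linarith [harc'.1]
          exact absurd (Real.sin_nonneg_of_nonneg_of_le_pi h5 h6) (not_le.2 hs)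
  · intro h
    rcases h with hca | hcb | ⟨n, hn⟩
    · rw [hca, show a + b - a = b by ring,
        abs_of_nonneg (Real.sin_nonneg_of_nonneg_of_le_pi hb0 hb1.le)]
      ring
    · rw [hcb, show a + b - b = a by ring,
        abs_of_nonneg (Real.sin_nonneg_of_nonneg_of_le_pi ha0 ha1.le)]
      ring
    · have hb' : θ = Real.arcsin t + π * n := by rw [hθdef, hn]; ring
      have hn01 : n = 0 ∨ n = 1 := by
        have r1 : (-1 : ℝ) < n := by
          have h9 : (-1 : ℝ) * π < (n : ℝ) * π := by
            have : π * (n : ℝ) = θ - Real.arcsin t := by rw [hb']; ring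
            linarith [this, harc'.1, harc'.2, hθlo, hθhi, haφ, haφ2, haφ3]
          exact (mul_lt_mul_iff_left₀ hpi).1 h9
        have r2 : (n : ℝ) < 2 := by
          have h9 : (n : ℝ) * π < 2 * π := by
            have : π * (n : ℝ) = θ - Real.arcsin t := by rw [hb']; ring
            linarith [this, harc'.1, harc'.2, hθlo, hθhi, haφ, haφ2, haφ3]
          exact (mul_lt_mul_iff_left₀ hpi).1 h9
        have r1' : (-1 : ℤ) < n := by exact_mod_cast r1
        have r2' : (n : ℤ) < 2 := by exact_mod_cast r2
        omega
      rcases hn01 with rfl | rfl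
      · have hb'' : θ = Real.arcsin t := by push_cast at hb'; linarith
        rcases le_or_gt 0 φ with hφpos | hφneg
        · have habsφ : |φ| = φ := abs_of_nonneg hφpos
          have hst : Real.sin θ = t := by rw [hb'', Real.sin_arcsin ht1 ht2]
          have h5 : θ - φ ≤ 0 := by rw [habsφ] at harc'; linarith [harc'.2, hb'']
          have h6 : -π ≤ θ - φ := by rw [habsφ] at harc'; have := hb''; linarith [harc'.1]
          have hsn : Real.sin (θ - φ) ≤ 0 := by
            have h7 := Real.sin_nonneg_of_nonneg_of_le_pi (x := -(θ - φ)) (by linarith) (by linarith)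
            rw [Real.sin_neg] at h7
            linarith
          have hsn' : Real.sin (a + b - c) ≤ 0 := by rw [ed]; exact hsn
          have h2 : Real.cos φ * Real.sin θ - Real.cos ψ * Real.sin φ = 0 := by
            rw [hst, hteq, habsφ]
            field_simp
            ring
          rw [abs_of_nonpos hsn']
          linarith
        · have habsφ : |φ| = -φ := abs_of_neg hφneg
          have hb0' : b = 0 := by
            apply le_antisymm _ hb0
            rw [eb, hb'']
            rw [habsφ] at harc'
            linarith [harc'.2]
          have harceq : Real.arcsin t = -φ := by
            have : θ + φ = b := eb.symm
            rw [hb0'] at this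
            linarith [hb'']
          have hts : t = Real.sin (-φ) := by rw [← harceq, Real.sin_arcsin ht1 ht2]
          have hsφpos : 0 < Real.sin (-φ) :=
            Real.sin_pos_of_pos_of_lt_pi (by linarith) (by linarith)
          have hcψφ : Real.cos ψ = Real.cos φ := by
            have h8 : Real.sin (-φ) * Real.cos ψ / Real.cos φ = Real.sin (-φ) := by
              rw [hteq, habsφ] at hts
              linarith [hts]
            have h9 : Real.sin (-φ) * Real.cos ψ = Real.sin (-φ) * Real.cos φ := by
              rw [div_eq_iff (ne_of_gt hcosφ)] at h8
              linarith [h8]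
            exact mul_left_cancel₀ (ne_of_gt hsφpos) h9
          have hψφ : ψ = -φ := by
            apply Real.injOn_cos ⟨hψpos, hψlt.le⟩ ⟨by linarith, by linarith⟩
            rw [hcψφ, Real.cos_neg]
          have hc0' : c = 0 := by rw [ec]; linarith
          rw [hb0', hc0', show a + 0 - 0 = a by ring,
            abs_of_nonneg (Real.sin_nonneg_of_nonneg_of_le_pi ha0 ha1.le)]
          simp
      · have hb'' : θ = Real.arcsin t + π := by push_cast at hb'; linarith
        rcases le_or_gt 0 φ with hφpos | hφneg
        · exfalso
          have habsφ : |φ| = φ := abs_of_nonneg hφpos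
          rw [habsφ] at harc'
          have : b = Real.arcsin t + π + φ := by rw [eb, hb'']
          linarith [harc'.1]
        · have habsφ : |φ| = -φ := abs_of_neg hφneg
          have hst : Real.sin θ = -t := by
            rw [hb'', Real.sin_add_pi, Real.sin_arcsin ht1 ht2]
          have h2 : Real.cos φ * Real.sin θ - Real.cos ψ * Real.sin φ = 0 := by
            rw [hst, hteq, habsφ]
            field_simp
            rw [Real.sin_neg]
            ring
          rw [habsφ] at harc'
          have h5 : π ≤ θ - φ := by rw [hb'']; linarith [harc'.1]
          have h6 : θ - φ ≤ 2 * π := by rw [hb'']; linarith [harc'.2]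
          have hsn : Real.sin (θ - φ) ≤ 0 := by
            have h7 := Real.sin_nonneg_of_nonneg_of_le_pi (x := θ - φ - π) (by linarith) (by linarith)
            rw [Real.sin_sub_pi] at h7
            linarith
          have hsn' : Real.sin (a + b - c) ≤ 0 := by rw [ed]; exact hsn
          rw [abs_of_nonpos hsn']
          linarith

lemma FPUaux.omg_add (x : ℝ) (n : ℤ) : omg (x + 2 * π * n) = omg x := by
  unfold omg
  rw [show (x + 2 * π * n) / 2 = x / 2 + (n : ℝ) * π by push_cast; ring,
    Real.sin_add_int_mul_pi, abs_mul]
  have : |((-1 : ℝ) ^ n)| = 1 := by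
    rcases Int.even_or_odd n with h | h
    · rw [h.neg_one_zpow]; norm_num
    · rw [Odd.neg_one_zpow h]; norm_num
  rw [this, one_mul]

lemma FPUaux.mod2pi_sub (x : ℝ) : x = mod2pi x + 2 * π * (⌊x / (2 * π)⌋ : ℤ) := by
  unfold mod2pi; push_cast; ring

lemma FPUaux.mod2pi_eq (x : ℝ) : mod2pi x = 2 * π * Int.fract (x / (2 * π)) := by
  have h2 : (2 : ℝ) * π ≠ 0 := by positivity
  unfold mod2pi
  rw [Int.fract, mul_sub, mul_div_cancel₀ x h2]

lemma FPUaux.mod2pi_nonneg (x : ℝ) : 0 ≤ mod2pi x := by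
  rw [FPUaux.mod2pi_eq]
  have := Int.fract_nonneg (x / (2 * π))
  positivity

lemma FPUaux.mod2pi_lt (x : ℝ) : mod2pi x < 2 * π := by
  rw [FPUaux.mod2pi_eq]
  have h1 := Int.fract_lt_one (x / (2 * π))
  have h2 : (0:ℝ) < 2 * π := by positivity
  calc 2 * π * Int.fract (x / (2 * π)) < 2 * π * 1 := by
        exact (mul_lt_mul_iff_right₀ h2).2 h1
    _ = 2 * π := by ring

theorem energy_constraint_zero_set (x y z : ℝ) :
    Omg x y z = 0 ↔
      ((∃ n : ℤ, z = x + 2 * π * n) ∨ (∃ n : ℤ, z = y + 2 * π * n) ∨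
        (∃ n : ℤ, y = hFPU x z + 2 * π * n)) := by
  have hpi := Real.pi_pos
  have h2pi : (0:ℝ) < 2 * π := by positivity
  obtain ⟨kx, hkx⟩ : ∃ k : ℤ, x = mod2pi x + 2 * π * k := ⟨_, FPUaux.mod2pi_sub x⟩
  obtain ⟨ky, hky⟩ : ∃ k : ℤ, y = mod2pi y + 2 * π * k := ⟨_, FPUaux.mod2pi_sub y⟩
  obtain ⟨kz, hkz⟩ : ∃ k : ℤ, z = mod2pi z + 2 * π * k := ⟨_, FPUaux.mod2pi_sub z⟩
  have hx0 := FPUaux.mod2pi_nonneg x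
  have hx1 := FPUaux.mod2pi_lt x
  have hy0 := FPUaux.mod2pi_nonneg y
  have hy1 := FPUaux.mod2pi_lt y
  have hz0 := FPUaux.mod2pi_nonneg z
  have hz1 := FPUaux.mod2pi_lt z
  set xr := mod2pi x with hxr
  set yr := mod2pi y with hyr
  set zr := mod2pi z with hzr
  have homg : Omg x y z = Real.sin (xr / 2) + Real.sin (yr / 2) - Real.sin (zr / 2)
      - |Real.sin (xr / 2 + yr / 2 - zr / 2)| := by
    unfold Omg
    have e1 : omg x = omg xr := by rw [hkx]; exact FPUaux.omg_add xr kx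
    have e2 : omg y = omg yr := by rw [hky]; exact FPUaux.omg_add yr ky
    have e3 : omg z = omg zr := by rw [hkz]; exact FPUaux.omg_add zr kz
    have e4 : omg (x + y - z) = omg (xr + yr - zr) := by
      rw [show x + y - z = (xr + yr - zr) + 2 * π * ((kx + ky - kz : ℤ) : ℝ) by
        rw [hkx, hky, hkz]; push_cast; ring]
      exact FPUaux.omg_add _ _
    rw [e1, e2, e3, e4]
    unfold omg
    rw [abs_of_nonneg (Real.sin_nonneg_of_nonneg_of_le_pi (by linarith) (by linarith)),
      abs_of_nonneg (Real.sin_nonneg_of_nonneg_of_le_pi (by linarith) (by linarith)),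
      abs_of_nonneg (Real.sin_nonneg_of_nonneg_of_le_pi (by linarith) (by linarith)),
      show (xr + yr - zr) / 2 = xr / 2 + yr / 2 - zr / 2 by ring]
  have hmzero : ∀ (u v : ℝ) (m : ℤ), 0 ≤ u → u < 2 * π → 0 ≤ v → v < 2 * π →
      u - v = 2 * π * m → u = v := by
    intro u v m hu0 hu1 hv0 hv1 hm
    have r1 : ((-1 : ℤ) : ℝ) < m := by
      have : 2 * π * (-1 : ℝ) < 2 * π * (m : ℝ) := by push_cast; linarith
      exact_mod_cast (mul_lt_mul_iff_right₀ h2pi).1 this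
    have r2 : (m : ℝ) < ((1 : ℤ) : ℝ) := by
      have : 2 * π * (m : ℝ) < 2 * π * (1 : ℝ) := by linarith
      exact_mod_cast (mul_lt_mul_iff_right₀ h2pi).1 this
    have r1' : (-1 : ℤ) < m := by exact_mod_cast r1
    have r2' : m < (1 : ℤ) := by exact_mod_cast r2
    have : m = 0 := by omega
    rw [this] at hm; push_cast at hm; linarith
  have hzx : (∃ n : ℤ, z = x + 2 * π * n) ↔ zr = xr := by
    constructor
    · rintro ⟨n, hn⟩
      refine hmzero zr xr (kx + n - kz) hz0 hz1 hx0 hx1 ?_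
      rw [hkx, hkz] at hn; push_cast; linarith
    · intro h
      exact ⟨kz - kx, by rw [hkx, hkz, h]; push_cast; ring⟩
  have hzy : (∃ n : ℤ, z = y + 2 * π * n) ↔ zr = yr := by
    constructor
    · rintro ⟨n, hn⟩
      refine hmzero zr yr (ky + n - kz) hz0 hz1 hy0 hy1 ?_
      rw [hky, hkz] at hn; push_cast; linarith
    · intro h
      exact ⟨kz - ky, by rw [hky, hkz, h]; push_cast; ring⟩
  have hf : hFPU x z = h0 xr zr - 2 * π * kx := by
    unfold hFPU
    rw [← hxr, ← hzr]
    have : x - xr = 2 * π * kx := by linarith [hkx]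
    rw [this]
  have hyh : (∃ n : ℤ, y = hFPU x z + 2 * π * n) ↔ ∃ n : ℤ, yr = h0 xr zr + 2 * π * n := by
    constructor
    · rintro ⟨n, hn⟩
      refine ⟨n - kx - ky, ?_⟩
      rw [hf] at hn; rw [hky] at hn; push_cast; linarith
    · rintro ⟨m, hm⟩
      refine ⟨m + ky + kx, ?_⟩
      rw [hf, hky, hm]; push_cast; ring
  rw [homg, hzx, hzy, hyh]
  have hcell := cell (xr / 2) (yr / 2) (zr / 2) (by linarith) (by linarith) (by linarith)
    (by linarith) (by linarith) (by linarith)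
  rw [hcell]
  refine or_congr ?_ (or_congr ?_ ?_)
  · constructor <;> intro h <;> linarith
  · constructor <;> intro h <;> linarith
  · have harg : Real.tan (|zr / 2 - xr / 2| / 2) * Real.cos ((xr / 2 + zr / 2) / 2)
        = Real.tan (|zr - xr| / 4) * Real.cos ((xr + zr) / 4) := by
      rw [show zr / 2 - xr / 2 = (zr - xr) / 2 by ring, abs_div,
        show |(2:ℝ)| = 2 by norm_num,
        show |zr - xr| / 2 / 2 = |zr - xr| / 4 by ring,
        show (xr / 2 + zr / 2) / 2 = (xr + zr) / 4 by ring]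
    constructor
    · rintro ⟨n, hn⟩
      refine ⟨n, ?_⟩
      rw [harg] at hn
      unfold h0
      linarith
    · rintro ⟨n, hn⟩
      refine ⟨n, ?_⟩
      rw [harg]
      unfold h0 at hn
      linarith
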